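/- arXiv:2407.04820 — 3 statements merged into one kernel-verified Lean document; each statement's English description precedes it below -/
import Mathlib

section
/- Let $(Z_n)_{n\ge 0}$ be a Galton–Watson branching process with $Z_0 = 1$, offspring mean $m = 1$ (critical case) and finite, nonzero offspring variance $\sigma^2$. Then $n \cdot \mathbb{P}(Z_n > 0) \to 2/\sigma^2$ as $n \to \infty$. -/
open MeasureTheory ProbabilityTheory Filter

noncomputable def Qf (m : ℕ) (t : ℝ) : ℝ :=
  ∑ i ∈ Finset.range m, ∑ j ∈ Finset.range i, (1 - t) ^ j

lemma Qf_cont (m : ℕ) : Continuous (Qf m) := by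
  unfold Qf
  exact continuous_finset_sum _ fun i _ => continuous_finset_sum _ fun j _ =>
    (continuous_const.sub continuous_id).pow j

lemma sum_range_id_real (m : ℕ) : ∑ i ∈ Finset.range m, (i : ℝ) = m * (m - 1) / 2 := by
  induction m with
  | zero => simp
  | succ n ih => rw [Finset.sum_range_succ, ih]; push_cast; ring

lemma Qf_zero (m : ℕ) : Qf m 0 = m * (m - 1) / 2 := by
  unfold Qf
  simp [← sum_range_id_real]

lemma Qf_nonneg {m : ℕ} {t : ℝ} (h1 : t ≤ 1) : 0 ≤ Qf m t :=
  Finset.sum_nonneg fun i _ => Finset.sum_nonneg fun j _ => pow_nonneg (by linarith) j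

lemma Qf_le {m : ℕ} {t : ℝ} (h0 : 0 ≤ t) (h1 : t ≤ 1) : Qf m t ≤ (m : ℝ) ^ 2 := by
  have : Qf m t ≤ ∑ i ∈ Finset.range m, (i : ℝ) := by
    apply Finset.sum_le_sum
    intro i _
    calc ∑ j ∈ Finset.range i, (1 - t) ^ j ≤ ∑ j ∈ Finset.range i, (1 : ℝ) :=
          Finset.sum_le_sum fun j _ => pow_le_one₀ (by linarith) (by linarith)
      _ = i := by simp
  refine this.trans ?_
  rw [sum_range_id_real]
  have : (0:ℝ) ≤ m := Nat.cast_nonneg m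
  nlinarith

lemma Qf_ge_one {m : ℕ} {t : ℝ} (hm : 2 ≤ m) (h1 : t ≤ 1) : 1 ≤ Qf m t := by
  have h1' : ∑ j ∈ Finset.range 1, (1 - t) ^ j = (1:ℝ) := by simp
  calc (1:ℝ) = ∑ j ∈ Finset.range 1, (1 - t) ^ j := h1'.symm
    _ ≤ Qf m t := by
        apply Finset.single_le_sum (f := fun i => ∑ j ∈ Finset.range i, (1 - t) ^ j)
          (fun i _ => Finset.sum_nonneg fun j _ => pow_nonneg (by linarith) j)
        simp only [Finset.mem_range]
        omega

lemma pow_one_sub_eq (m : ℕ) (t : ℝ) :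
    (1 - t) ^ m = 1 - m * t + t ^ 2 * Qf m t := by
  induction m with
  | zero => simp [Qf]
  | succ n ih =>
    have hgeo : (1:ℝ) - (1 - t) ^ n = t * ∑ j ∈ Finset.range n, (1 - t) ^ j := by
      have := geom_sum_mul (1 - t) n
      nlinarith [this]
    have : Qf (n+1) t = Qf n t + ∑ j ∈ Finset.range n, (1 - t) ^ j := by
      unfold Qf; rw [Finset.sum_range_succ]
    rw [this, pow_succ, ih]
    rw [ih] at hgeo
    push_cast
    linear_combination t * hgeo

/-- Kolmogorov's asymptotic for the survival probability of a critical
Galton–Watson process: `n * P(Z_n > 0) → 2 / σ²`. -/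
theorem kolmogorov_survival_asymptotic
    {Ω : Type*} [MeasureSpace Ω] [IsProbabilityMeasure (ℙ : Measure Ω)]
    (M : ℕ × ℕ → Ω → ℕ)
    (hmeas : ∀ p, Measurable (M p))
    (hindep : iIndepFun M ℙ)
    (hident : ∀ p, IdentDistrib (M p) (M (0, 0)) ℙ ℙ)
    (hmean : ∫ ω, (M (0, 0) ω : ℝ) ∂ℙ = 1)
    (σ2 : ℝ) (hσ2pos : 0 < σ2)
    (hvar : variance (fun ω => (M (0, 0) ω : ℝ)) ℙ = σ2)
    (Z : ℕ → Ω → ℕ)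
    (hZ0 : ∀ ω, Z 0 ω = 1)
    (hZrec : ∀ n ω, Z (n + 1) ω = ∑ i ∈ Finset.range (Z n ω), M (n, i) ω) :
    Tendsto (fun n : ℕ => (n : ℝ) * (ℙ {ω | 0 < Z n ω}).toReal)
      atTop (nhds (2 / σ2)) := by
  classical
  set X : Ω → ℝ := fun ω => (M (0,0) ω : ℝ) with hXdef
  have hXmeas : Measurable X := measurable_from_top.comp (hmeas (0,0))
  -- second moment
  have hmemp : MemLp X 2 ℙ := by
    by_contra h
    have h2 := evariance_eq_top hXmeas.aestronglyMeasurable h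
    rw [variance, h2] at hvar
    simp at hvar
    exact absurd hvar.symm (by linarith)
  have hXint : Integrable X ℙ := hmemp.integrable one_le_two
  have hX2int : Integrable (fun ω => X ω ^ 2) ℙ := hmemp.integrable_sq
  have hEX2 : ∫ ω, X ω ^ 2 ∂ℙ = σ2 + 1 := by
    have hv := variance_eq_sub hmemp
    rw [hvar] at hv
    have h1 : (ℙ : Measure Ω)[X ^ 2] = ∫ ω, X ω ^ 2 ∂ℙ := by
      congr 1
    have h2 : (ℙ : Measure Ω)[X] = 1 := hmean
    rw [h1, h2] at hv
    linarith
  -- the generating function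
  set G : ℝ → ℝ := fun s => ∫ ω, s ^ M (0,0) ω ∂ℙ with hGdef
  have hpowmeas : ∀ (s : ℝ) p, Measurable fun ω => s ^ M p ω :=
    fun s p => measurable_from_top.comp (hmeas p)
  have hpowint : ∀ (s : ℝ), 0 ≤ s → s ≤ 1 → ∀ p, Integrable (fun ω => s ^ M p ω) ℙ := by
    intro s h0 h1 p
    refine Integrable.mono' (integrable_const 1) (hpowmeas s p).aestronglyMeasurable ?_
    filter_upwards with ω
    rw [Real.norm_eq_abs, abs_of_nonneg (pow_nonneg h0 _)]
    exact pow_le_one₀ h0 h1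
  have hGpow : ∀ (s : ℝ) p, ∫ ω, s ^ M p ω ∂ℙ = G s := by
    intro s p
    exact ((hident p).comp (u := fun m : ℕ => s ^ m) measurable_from_top).integral_eq
  have hG0 : ∀ s, 0 ≤ s → 0 ≤ G s :=
    fun s h0 => integral_nonneg fun ω => pow_nonneg h0 _
  have hG1 : ∀ s, 0 ≤ s → s ≤ 1 → G s ≤ 1 := by
    intro s h0 h1
    calc G s ≤ ∫ _, (1:ℝ) ∂ℙ :=
          integral_mono (hpowint s h0 h1 _) (integrable_const 1)
            (fun ω => pow_le_one₀ h0 h1)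
      _ = 1 := by simp
  have hGmono : ∀ s t, 0 ≤ s → s ≤ t → t ≤ 1 → G s ≤ G t := by
    intro s t h0 hst h1
    exact integral_mono (hpowint s h0 (hst.trans h1) _) (hpowint t (h0.trans hst) h1 _)
      (fun ω => pow_le_pow_left₀ h0 hst _)
  -- R and the fundamental identity
  set R : ℝ → ℝ := fun t => ∫ ω, Qf (M (0,0) ω) t ∂ℙ with hRdef
  have hQmeas : ∀ t : ℝ, Measurable fun ω => Qf (M (0,0) ω) t :=
    fun t => (measurable_from_top (f := fun m => Qf m t)).comp (hmeas (0,0))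
  have hQint : ∀ t : ℝ, 0 ≤ t → t ≤ 1 → Integrable (fun ω => Qf (M (0,0) ω) t) ℙ := by
    intro t h0 h1
    refine Integrable.mono' hX2int (hQmeas t).aestronglyMeasurable ?_
    filter_upwards with ω
    rw [Real.norm_eq_abs, abs_of_nonneg (Qf_nonneg h1)]
    exact (Qf_le h0 h1).trans_eq (by simp [hXdef])
  have hGiden : ∀ t : ℝ, 0 ≤ t → t ≤ 1 → G (1 - t) = 1 - t + t ^ 2 * R t := by
    intro t h0 h1
    have hint1 : Integrable (fun ω => 1 - X ω * t) ℙ := (integrable_const 1).sub (hXint.mul_const t)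
    have hint2 : Integrable (fun ω => t ^ 2 * Qf (M (0,0) ω) t) ℙ := (hQint t h0 h1).const_mul _
    have hpt : ∀ ω, (1 - t) ^ M (0,0) ω = (1 - X ω * t) + t ^ 2 * Qf (M (0,0) ω) t := by
      intro ω
      rw [pow_one_sub_eq]
    calc G (1 - t) = ∫ ω, ((1 - X ω * t) + t ^ 2 * Qf (M (0,0) ω) t) ∂ℙ := by
          simp only [hGdef]
          exact integral_congr_ae (Filter.Eventually.of_forall hpt)
      _ = (∫ ω, (1 - X ω * t) ∂ℙ) + ∫ ω, t ^ 2 * Qf (M (0,0) ω) t ∂ℙ :=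
          integral_add hint1 hint2
      _ = 1 - t + t ^ 2 * R t := by
          rw [integral_sub (integrable_const 1) (hXint.mul_const t), integral_mul_const,
            integral_const_mul, hmean]
          simp [hRdef]
  -- positivity of P(M ≥ 1) and P(M ≥ 2)
  have hP1 : 0 < (ℙ {ω | 1 ≤ M (0,0) ω}).toReal := by
    have hne : ℙ {ω | 1 ≤ M (0,0) ω} ≠ 0 := by
      intro h0
      have hae : ∀ᵐ ω ∂ℙ, M (0,0) ω = 0 := by
        rw [ae_iff]
        simpa [Nat.one_le_iff_ne_zero] using h0
      have hX0 : X =ᵐ[ℙ] (fun _ => (0:ℝ)) := by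
        filter_upwards [hae] with ω hω
        show (M (0,0) ω : ℝ) = 0
        rw [hω]
        norm_num
      have := integral_congr_ae hX0
      rw [hmean] at this
      simp at this
    exact ENNReal.toReal_pos hne (measure_ne_top _ _)
  have hP2 : 0 < (ℙ {ω | 2 ≤ M (0,0) ω}).toReal := by
    have hne : ℙ {ω | 2 ≤ M (0,0) ω} ≠ 0 := by
      intro h0
      have hae : ∀ᵐ ω ∂ℙ, M (0,0) ω < 2 := by
        rw [ae_iff]
        simpa only [not_lt] using h0
      have hsq : (fun ω => X ω ^ 2) =ᵐ[ℙ] X := by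
        filter_upwards [hae] with ω hω
        have hc : M (0,0) ω = 0 ∨ M (0,0) ω = 1 := by omega
        show (M (0,0) ω : ℝ) ^ 2 = (M (0,0) ω : ℝ)
        rcases hc with h | h <;> rw [h] <;> norm_num
      have := integral_congr_ae hsq
      rw [hEX2, hmean] at this
      linarith
    exact ENNReal.toReal_pos hne (measure_ne_top _ _)
  have hRge : ∀ t : ℝ, 0 ≤ t → t ≤ 1 → (ℙ {ω | 2 ≤ M (0,0) ω}).toReal ≤ R t := by
    intro t h0 h1
    have mset : MeasurableSet {ω | 2 ≤ M (0,0) ω} := measurableSet_le measurable_const (hmeas (0,0))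
    have hind : Integrable ({ω | 2 ≤ M (0,0) ω}.indicator (fun _ => (1:ℝ))) ℙ :=
      (integrable_const 1).indicator mset
    have hle : ∀ ω, ({ω | 2 ≤ M (0,0) ω}.indicator (fun _ => (1:ℝ))) ω ≤ Qf (M (0,0) ω) t := by
      intro ω
      by_cases h : 2 ≤ M (0,0) ω
      · simp only [Set.indicator_apply, Set.mem_setOf_eq]
        rw [if_pos h]
        exact Qf_ge_one h h1
      · simp only [Set.indicator_apply, Set.mem_setOf_eq]
        rw [if_neg h]
        exact Qf_nonneg h1
    calc (ℙ {ω | 2 ≤ M (0,0) ω}).toReal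
        = ∫ ω, ({ω | 2 ≤ M (0,0) ω}.indicator (fun _ => (1:ℝ))) ω ∂ℙ :=
          (integral_indicator_one mset).symm
      _ ≤ R t := integral_mono hind (hQint t h0 h1) hle
  have hGlt1 : ∀ s, 0 ≤ s → s < 1 → G s < 1 := by
    intro s h0 h1
    have mset : MeasurableSet {ω | 1 ≤ M (0,0) ω} := measurableSet_le measurable_const (hmeas (0,0))
    have hle : ∀ ω, ({ω | 1 ≤ M (0,0) ω}.indicator (fun _ => (1 - s))) ω ≤ 1 - s ^ M (0,0) ω := by
      intro ω
      by_cases h : 1 ≤ M (0,0) ω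
      · simp only [Set.indicator_apply, Set.mem_setOf_eq]
        rw [if_pos h]
        have : s ^ M (0,0) ω ≤ s ^ 1 := pow_le_pow_of_le_one h0 h1.le h
        rw [pow_one] at this
        linarith
      · simp only [Set.indicator_apply, Set.mem_setOf_eq]
        rw [if_neg h]
        have : s ^ M (0,0) ω ≤ 1 := pow_le_one₀ h0 h1.le
        linarith
    have hint3 : Integrable (fun ω => 1 - s ^ M (0,0) ω) ℙ :=
      (integrable_const 1).sub (hpowint s h0 h1.le (0,0))
    have hmono := integral_mono ((integrable_const (1 - s)).indicator mset) hint3 hle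
    rw [MeasureTheory.integral_indicator_const (1 - s) mset,
      integral_sub (integrable_const 1) (hpowint s h0 h1.le (0,0))] at hmono
    have hGs : ∫ ω, s ^ M (0,0) ω ∂ℙ = G s := rfl
    rw [hGs] at hmono
    simp only [smul_eq_mul, integral_const, measureReal_def, measure_univ, ENNReal.toReal_one, one_smul] at hmono
    nlinarith [hP1]
  -- measurability of Z
  have hZmeasS : ∀ n, Measurable[⨆ p ∈ {q : ℕ × ℕ | q.1 < n}, MeasurableSpace.comap (M p) ⊤] (Z n) := by
    intro n
    induction n with
    | zero =>
      have hz : Z 0 = fun _ => 1 := funext hZ0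
      rw [hz]
      exact measurable_const
    | succ n ih =>
      have hmono : (⨆ p ∈ {q : ℕ × ℕ | q.1 < n}, MeasurableSpace.comap (M p) ⊤) ≤
          ⨆ p ∈ {q : ℕ × ℕ | q.1 < n+1}, MeasurableSpace.comap (M p) ⊤ := by
        apply iSup₂_le
        intro p hp
        exact le_biSup (f := fun p : ℕ × ℕ => MeasurableSpace.comap (M p) ⊤)
          (show p ∈ {q : ℕ × ℕ | q.1 < n+1} from Nat.lt_succ_of_lt hp)
      have hZn : Measurable[⨆ p ∈ {q : ℕ × ℕ | q.1 < n+1}, MeasurableSpace.comap (M p) ⊤] (Z n) :=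
        ih.mono hmono le_rfl
      have hMm : ∀ i : ℕ,
          Measurable[⨆ p ∈ {q : ℕ × ℕ | q.1 < n+1}, MeasurableSpace.comap (M p) ⊤] (M (n, i)) := by
        intro i
        have hle : MeasurableSpace.comap (M (n,i)) ⊤ ≤
            ⨆ p ∈ {q : ℕ × ℕ | q.1 < n+1}, MeasurableSpace.comap (M p) ⊤ :=
          le_biSup (f := fun p : ℕ × ℕ => MeasurableSpace.comap (M p) ⊤)
            (show ((n,i) : ℕ×ℕ) ∈ {q : ℕ × ℕ | q.1 < n+1} by simp)
        exact (Measurable.of_comap_le le_rfl).mono hle le_rfl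
      refine @measurable_to_countable' ℕ Ω _ _
        (⨆ p ∈ {q : ℕ × ℕ | q.1 < n+1}, MeasurableSpace.comap (M p) ⊤) (Z (n+1)) fun z => ?_
      have hdec : (Z (n+1)) ⁻¹' {z} =
          ⋃ c : ℕ, ({ω | Z n ω = c} ∩ {ω | ∑ i ∈ Finset.range c, M (n,i) ω = z}) := by
        ext ω
        simp only [Set.mem_preimage, Set.mem_singleton_iff, Set.mem_iUnion, Set.mem_inter_iff,
          Set.mem_setOf_eq]
        constructor
        · intro h
          exact ⟨Z n ω, rfl, by rw [← hZrec n ω]; exact h⟩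
        · rintro ⟨c, hc, hs⟩
          rw [hZrec n ω, hc]
          exact hs
      rw [hdec]
      apply MeasurableSet.iUnion
      intro c
      exact (hZn (measurableSet_singleton c)).inter
        ((Finset.measurable_sum (Finset.range c) (fun i _ => hMm i)) (measurableSet_singleton z))
  have hZmeas : ∀ n, Measurable (Z n) := by
    intro n
    exact (hZmeasS n).mono (iSup₂_le fun p _ => (hmeas p).comap_le) le_rfl
  -- expectation of products of s^{M (n,i)}
  have hprodmeas : ∀ (s : ℝ) n z, Measurable (fun ω => ∏ i ∈ Finset.range z, s ^ M (n, i) ω) :=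
    fun s n z => Finset.measurable_prod _ fun i _ => hpowmeas s (n, i)
  have hprodint' : ∀ (s : ℝ), 0 ≤ s → s ≤ 1 → ∀ n z,
      Integrable (fun ω => ∏ i ∈ Finset.range z, s ^ M (n, i) ω) ℙ := by
    intro s h0 h1 n z
    refine Integrable.mono' (integrable_const 1) (hprodmeas s n z).aestronglyMeasurable ?_
    filter_upwards with ω
    rw [Real.norm_eq_abs, abs_of_nonneg (Finset.prod_nonneg fun i _ => pow_nonneg h0 _)]
    exact Finset.prod_le_one (fun i _ => pow_nonneg h0 _) (fun i _ => pow_le_one₀ h0 h1)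
  have hprodInt : ∀ (s : ℝ), 0 ≤ s → s ≤ 1 → ∀ n z,
      ∫ ω, ∏ i ∈ Finset.range z, s ^ M (n, i) ω ∂ℙ = G s ^ z := by
    intro s h0 h1 n z
    induction z with
    | zero => simp
    | succ z ih =>
      have hiF : iIndepFun (fun p (ω : Ω) => s ^ M p ω) ℙ :=
        hindep.comp (fun _ (m : ℕ) => s ^ m) (fun _ => measurable_from_top)
      have hnotmem : (n, z) ∉ (Finset.range z).image (fun i => (n, i)) := by
        simp
      have hIF := hiF.indepFun_finsetProd_of_notMem (fun p => hpowmeas s p) hnotmem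
      have hprodeq : (∏ p ∈ (Finset.range z).image (fun i => (n, i)), fun ω : Ω => s ^ M p ω)
          = fun ω : Ω => ∏ i ∈ Finset.range z, s ^ M (n, i) ω := by
        funext ω
        rw [Finset.prod_apply]
        rw [Finset.prod_image (fun a _ b _ h => by simpa using h)]
      rw [hprodeq] at hIF
      have hmul := hIF.integral_fun_mul_eq_mul_integral (hprodint' s h0 h1 n z).aestronglyMeasurable (hpowint s h0 h1 (n, z)).aestronglyMeasurable
      calc ∫ ω, ∏ i ∈ Finset.range (z+1), s ^ M (n, i) ω ∂ℙ
          = ∫ ω, (∏ i ∈ Finset.range z, s ^ M (n, i) ω) * s ^ M (n, z) ω ∂ℙ := by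
            simp only [Finset.prod_range_succ]
        _ = (∫ ω, ∏ i ∈ Finset.range z, s ^ M (n, i) ω ∂ℙ) * ∫ ω, s ^ M (n, z) ω ∂ℙ := hmul
        _ = G s ^ z * G s := by rw [ih, hGpow]
        _ = G s ^ (z+1) := (pow_succ _ _).symm
  -- the one-step identity
  have hstep : ∀ (s : ℝ), 0 ≤ s → s ≤ 1 → ∀ n,
      ∫ ω, s ^ Z (n+1) ω ∂ℙ = ∫ ω, (G s) ^ Z n ω ∂ℙ := by
    intro s h0 h1 n
    have hAm : ∀ z : ℕ, MeasurableSet {ω | Z n ω = z} :=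
      fun z => hZmeas n (measurableSet_singleton z)
    have hAd : Pairwise (Function.onFun Disjoint (fun z : ℕ => {ω | Z n ω = z})) := by
      intro a b hab
      simp only [Function.onFun, Set.disjoint_left, Set.mem_setOf_eq]
      intro ω ha hb
      exact hab (by rw [← ha, ← hb])
    have hAU : (⋃ z : ℕ, {ω | Z n ω = z}) = Set.univ := by
      ext ω
      simp
    have hint1 : Integrable (fun ω => s ^ Z (n+1) ω) ℙ := by
      refine Integrable.mono' (integrable_const 1)
        (measurable_from_top.comp (hZmeas (n+1))).aestronglyMeasurable ?_
      filter_upwards with ω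
      rw [Real.norm_eq_abs, abs_of_nonneg (pow_nonneg h0 _)]
      exact pow_le_one₀ h0 h1
    have hint2 : Integrable (fun ω => (G s) ^ Z n ω) ℙ := by
      refine Integrable.mono' (integrable_const 1)
        (measurable_from_top.comp (hZmeas n)).aestronglyMeasurable ?_
      filter_upwards with ω
      rw [Real.norm_eq_abs, abs_of_nonneg (pow_nonneg (hG0 s h0) _)]
      exact pow_le_one₀ (hG0 s h0) (hG1 s h0 h1)
    have hdisj : Disjoint {q : ℕ × ℕ | q.1 < n} {q : ℕ × ℕ | q.1 = n} := by
      rw [Set.disjoint_left]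
      intro q hq hq'
      simp only [Set.mem_setOf_eq] at hq hq'
      omega
    have hindS : Indep (⨆ p ∈ {q : ℕ × ℕ | q.1 < n}, MeasurableSpace.comap (M p) ⊤)
        (⨆ p ∈ {q : ℕ × ℕ | q.1 = n}, MeasurableSpace.comap (M p) ⊤) ℙ :=
      indep_iSup_of_disjoint (fun p => (hmeas p).comap_le)
        (hindep : iIndep (fun p => MeasurableSpace.comap (M p) ⊤) ℙ) hdisj
    have hWmeasT : ∀ z : ℕ, Measurable[⨆ p ∈ {q : ℕ × ℕ | q.1 = n}, MeasurableSpace.comap (M p) ⊤]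
        (fun ω => ∏ i ∈ Finset.range z, s ^ M (n, i) ω) := by
      intro z
      refine Finset.measurable_prod _ fun i _ => ?_
      have hle : MeasurableSpace.comap (M (n,i)) ⊤ ≤
          ⨆ p ∈ {q : ℕ × ℕ | q.1 = n}, MeasurableSpace.comap (M p) ⊤ :=
        le_biSup (f := fun p : ℕ × ℕ => MeasurableSpace.comap (M p) ⊤)
          (show ((n,i) : ℕ×ℕ) ∈ {q : ℕ × ℕ | q.1 = n} from rfl)
      exact (measurable_from_top (f := fun m : ℕ => s ^ m)).comp
        ((Measurable.of_comap_le le_rfl).mono hle le_rfl)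
    have hindZW : ∀ z : ℕ, IndepFun (Z n) (fun ω => ∏ i ∈ Finset.range z, s ^ M (n, i) ω) ℙ := by
      intro z
      exact indep_of_indep_of_le_left
        (indep_of_indep_of_le_right hindS (measurable_iff_comap_le.mp (hWmeasT z)))
        (measurable_iff_comap_le.mp (hZmeasS n))
    have hpiece1 : ∀ z : ℕ, ∫ ω in {ω | Z n ω = z}, s ^ Z (n+1) ω ∂ℙ
        = (ℙ {ω | Z n ω = z}).toReal * G s ^ z := by
      intro z
      have hEq : Set.EqOn (fun ω => s ^ Z (n+1) ω)
          (fun ω => ∏ i ∈ Finset.range z, s ^ M (n, i) ω) {ω | Z n ω = z} := by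
        intro ω hω
        simp only
        rw [hZrec n ω, (hω : Z n ω = z), ← Finset.prod_pow_eq_pow_sum]
      rw [setIntegral_congr_fun (hAm z) hEq]
      have hφ : IndepFun (fun ω => if Z n ω = z then (1:ℝ) else 0)
          (fun ω => ∏ i ∈ Finset.range z, s ^ M (n, i) ω) ℙ :=
        (hindZW z).comp (measurable_from_top (f := fun c : ℕ => if c = z then (1:ℝ) else 0))
          measurable_id
      have hφint : Integrable (fun ω => if Z n ω = z then (1:ℝ) else 0) ℙ := by
        refine Integrable.mono' (integrable_const 1)
          ((measurable_from_top (f := fun c : ℕ => if c = z then (1:ℝ) else 0)).comp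
            (hZmeas n)).aestronglyMeasurable ?_
        filter_upwards with ω
        by_cases h : Z n ω = z <;> simp [h]
      have hmul := hφ.integral_fun_mul_eq_mul_integral hφint.aestronglyMeasurable (hprodint' s h0 h1 n z).aestronglyMeasurable
      have hLHS : ∫ ω in {ω | Z n ω = z}, (∏ i ∈ Finset.range z, s ^ M (n, i) ω) ∂ℙ
          = ∫ ω, (if Z n ω = z then (1:ℝ) else 0) * ∏ i ∈ Finset.range z, s ^ M (n, i) ω ∂ℙ := by
        rw [← integral_indicator (hAm z)]
        congr 1
        funext ω
        simp only [Set.indicator_apply, Set.mem_setOf_eq, ite_mul, one_mul, zero_mul]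
      have hφval : ∫ ω, (if Z n ω = z then (1:ℝ) else 0) ∂ℙ = (ℙ {ω | Z n ω = z}).toReal := by
        rw [← measureReal_def, ← integral_indicator_one (hAm z)]
        congr 1
        funext ω
        simp only [Set.indicator_apply, Set.mem_setOf_eq, Pi.one_apply]
      have hmul' : ∫ ω, (if Z n ω = z then (1:ℝ) else 0) * ∏ i ∈ Finset.range z, s ^ M (n, i) ω ∂ℙ
          = (∫ ω, (if Z n ω = z then (1:ℝ) else 0) ∂ℙ)
            * ∫ ω, ∏ i ∈ Finset.range z, s ^ M (n, i) ω ∂ℙ := hmul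
      rw [hLHS, hmul', hφval, hprodInt s h0 h1 n z]
    have hpiece2 : ∀ z : ℕ, ∫ ω in {ω | Z n ω = z}, (G s) ^ Z n ω ∂ℙ
        = (ℙ {ω | Z n ω = z}).toReal * G s ^ z := by
      intro z
      have hEq : Set.EqOn (fun ω => (G s) ^ Z n ω) (fun _ => G s ^ z) {ω | Z n ω = z} := by
        intro ω hω
        simp only
        rw [(hω : Z n ω = z)]
      rw [setIntegral_congr_fun (hAm z) hEq, setIntegral_const, smul_eq_mul, measureReal_def]
    have hs1 : ∫ ω, s ^ Z (n+1) ω ∂ℙ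
        = ∑' z : ℕ, ∫ ω in {ω | Z n ω = z}, s ^ Z (n+1) ω ∂ℙ := by
      conv_lhs => rw [← setIntegral_univ (f := fun ω => s ^ Z (n+1) ω) (μ := ℙ), ← hAU]
      exact integral_iUnion hAm hAd hint1.integrableOn
    have hs2 : ∫ ω, (G s) ^ Z n ω ∂ℙ
        = ∑' z : ℕ, ∫ ω in {ω | Z n ω = z}, (G s) ^ Z n ω ∂ℙ := by
      conv_lhs => rw [← setIntegral_univ (f := fun ω => (G s) ^ Z n ω) (μ := ℙ), ← hAU]
      exact integral_iUnion hAm hAd hint2.integrableOn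
    rw [hs1, hs2]
    exact tsum_congr fun z => (hpiece1 z).trans (hpiece2 z).symm
  -- iteration
  have hkey : ∀ n (s : ℝ), 0 ≤ s → s ≤ 1 → ∫ ω, s ^ Z n ω ∂ℙ = G^[n] s := by
    intro n
    induction n with
    | zero =>
      intro s h0 h1
      simp only [Function.iterate_zero, id]
      have : ∀ ω, s ^ Z 0 ω = s := by intro ω; rw [hZ0 ω, pow_one]
      simp only [this]
      simp
    | succ n ih =>
      intro s h0 h1
      rw [hstep s h0 h1 n, ih (G s) (hG0 s h0) (hG1 s h0 h1),
        ← Function.iterate_succ_apply]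
  -- extinction probability iterates
  set v : ℕ → ℝ := fun n => G^[n] 0 with hvdef
  set u : ℕ → ℝ := fun n => 1 - v n with hudef
  have hv_succ : ∀ n, v (n+1) = G (v n) := by
    intro n
    simp only [hvdef, Function.iterate_succ_apply']
  have hv_mem : ∀ n, 0 ≤ v n ∧ v n < 1 := by
    intro n
    induction n with
    | zero => simp [hvdef]
    | succ n ih =>
      rw [hv_succ]
      exact ⟨hG0 _ ih.1, hGlt1 _ ih.1 ih.2⟩
  have hv_mono : Monotone v := by
    apply monotone_nat_of_le_succ
    intro n
    induction n with
    | zero =>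
      rw [hv_succ]
      simpa [hvdef] using hG0 0 le_rfl
    | succ n ih =>
      rw [hv_succ, hv_succ]
      exact hGmono _ _ (hv_mem n).1 ih (hv_mem (n+1)).2.le
  have hv_lim : Tendsto v atTop (nhds 1) := by
    have hbdd : BddAbove (Set.range v) := ⟨1, by rintro x ⟨n, rfl⟩; exact (hv_mem n).2.le⟩
    set L := ⨆ n, v n with hLdef
    have hlim : Tendsto v atTop (nhds L) := tendsto_atTop_ciSup hv_mono hbdd
    have hL0 : 0 ≤ L := by
      have := le_ciSup hbdd 0
      simpa [hvdef, hLdef] using this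
    have hL1 : L ≤ 1 := ciSup_le fun n => (hv_mem n).2.le
    have hGL : G L = L := by
      have h1 : Tendsto (fun n => v (n+1)) atTop (nhds L) :=
        hlim.comp (tendsto_add_atTop_nat 1)
      have h2 : Tendsto (fun n => G (v n)) atTop (nhds (G L)) := by
        simp only [hGdef]
        apply tendsto_integral_of_dominated_convergence (bound := fun _ => (1:ℝ))
        · intro n; exact (hpowmeas (v n) (0,0)).aestronglyMeasurable
        · exact integrable_const 1
        · intro n
          filter_upwards with ω
          rw [Real.norm_eq_abs, abs_of_nonneg (pow_nonneg (hv_mem n).1 _)]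
          exact pow_le_one₀ (hv_mem n).1 (hv_mem n).2.le
        · filter_upwards with ω
          exact hlim.pow _
      have h1' : Tendsto (fun n => G (v n)) atTop (nhds L) := by
        apply h1.congr
        intro n
        rw [hv_succ]
      exact tendsto_nhds_unique h2 h1'
    have hLeq : L = 1 := by
      by_contra hne
      have hLlt : L < 1 := lt_of_le_of_ne hL1 hne
      have hid := hGiden (1 - L) (by linarith) (by linarith)
      rw [sub_sub_cancel] at hid
      rw [hGL] at hid
      have hR := (hRge (1 - L) (by linarith) (by linarith)).trans_lt' hP2
      have h5 : (0:ℝ) < (1 - L)^2 := pow_pos (by linarith) 2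
      linarith [mul_pos h5 hR]
    rw [← hLeq]
    exact hlim
  have hu_pos : ∀ n, 0 < u n := fun n => by
    simp only [hudef]; linarith [(hv_mem n).2]
  have hu_le1 : ∀ n, u n ≤ 1 := fun n => by
    simp only [hudef]; linarith [(hv_mem n).1]
  have hu_lim : Tendsto u atTop (nhds 0) := by
    have := hv_lim.const_sub 1
    simpa [hudef] using this
  -- convergence of R along u
  have hRlim : Tendsto (fun n => R (u n)) atTop (nhds (σ2 / 2)) := by
    have hlimval : ∫ ω, Qf (M (0,0) ω) 0 ∂ℙ = σ2 / 2 := by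
      have hpt : ∀ ω, Qf (M (0,0) ω) 0 = (X ω ^ 2 - X ω) / 2 := by
        intro ω
        rw [Qf_zero]
        simp only [hXdef]
        ring
      rw [integral_congr_ae (Filter.Eventually.of_forall hpt), integral_div,
        integral_sub hX2int hXint, hEX2, hmean]
      ring
    have hR0 : Tendsto R (nhdsWithin 0 (Set.Icc 0 1)) (nhds (σ2 / 2)) := by
      rw [← hlimval]
      apply tendsto_integral_filter_of_dominated_convergence (bound := fun ω => X ω ^ 2)
      · exact Filter.Eventually.of_forall fun t => (hQmeas t).aestronglyMeasurable
      · filter_upwards [eventually_mem_nhdsWithin] with t ht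
        filter_upwards with ω
        rw [Real.norm_eq_abs, abs_of_nonneg (Qf_nonneg ht.2)]
        exact (Qf_le ht.1 ht.2).trans_eq (by simp [hXdef])
      · exact hX2int
      · filter_upwards with ω
        exact ((Qf_cont (M (0,0) ω)).tendsto 0).mono_left nhdsWithin_le_nhds
    have hu_in : Tendsto u atTop (nhdsWithin 0 (Set.Icc 0 1)) := by
      rw [tendsto_nhdsWithin_iff]
      exact ⟨hu_lim, Filter.Eventually.of_forall fun n => ⟨(hu_pos n).le, hu_le1 n⟩⟩
    exact hR0.comp hu_in
  -- recursion for u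
  have hu_rec : ∀ n, u (n+1) = u n - u n ^ 2 * R (u n) := by
    intro n
    have h1 : (1:ℝ) - u n = v n := by simp [hudef]
    have hthis := hGiden (u n) (hu_pos n).le (hu_le1 n)
    have h4 : v (n+1) = G (1 - u n) := by rw [hv_succ, ← h1]
    rw [hthis] at h4
    have h5 : u (n+1) = 1 - v (n+1) := rfl
    linarith [h4, h5]
  -- telescoping and Cesàro
  set e : ℕ → ℝ := fun n => R (u n) / (1 - u n * R (u n)) with hedef
  have hd_pos : ∀ n, 0 < 1 - u n * R (u n) := by
    intro n
    have h := hu_rec n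
    have h2 : u (n+1) = u n * (1 - u n * R (u n)) := by rw [h]; ring
    have := hu_pos (n+1)
    rw [h2] at this
    rcases mul_pos_iff.mp this with h3 | h3
    · exact h3.2
    · linarith [hu_pos n, h3.1]
  have he : ∀ n, (u (n+1))⁻¹ - (u n)⁻¹ = e n := by
    intro n
    have h2 : u (n+1) = u n * (1 - u n * R (u n)) := by rw [hu_rec n]; ring
    rw [h2]
    have hun := (hu_pos n).ne'
    have hdn := (hd_pos n).ne'
    simp only [hedef]
    field_simp
    ring
  have he_lim : Tendsto e atTop (nhds (σ2 / 2)) := by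
    have hd_lim : Tendsto (fun n => 1 - u n * R (u n)) atTop (nhds 1) := by
      have : Tendsto (fun n => u n * R (u n)) atTop (nhds 0) := by
        simpa using hu_lim.mul hRlim
      simpa using this.const_sub 1
    have := hRlim.div hd_lim one_ne_zero
    rw [div_one] at this
    exact this
  -- conclude
  have hinv_lim : Tendsto (fun n : ℕ => (u n)⁻¹ / n) atTop (nhds (σ2 / 2)) := by
    have htel : ∀ n, (u n)⁻¹ = (u 0)⁻¹ + ∑ k ∈ Finset.range n, e k := by
      intro n
      have hsum := Finset.sum_range_sub (f := fun k => (u k)⁻¹) n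
      have hcongr : ∑ k ∈ Finset.range n, ((u (k+1))⁻¹ - (u k)⁻¹) = ∑ k ∈ Finset.range n, e k :=
        Finset.sum_congr rfl fun k _ => he k
      rw [hcongr] at hsum
      linarith
    have hc : Tendsto (fun n : ℕ => (n:ℝ)⁻¹ • ∑ k ∈ Finset.range n, e k) atTop (nhds (σ2/2)) :=
      he_lim.cesaro
    have h0 : Tendsto (fun n : ℕ => (u 0)⁻¹ / n) atTop (nhds 0) :=
      tendsto_const_div_atTop_nhds_zero_nat _
    have hadd := h0.add hc
    rw [zero_add] at hadd
    apply hadd.congr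
    intro n
    rw [htel n]
    simp only [smul_eq_mul]
    ring
  have hmain : Tendsto (fun n : ℕ => (n : ℝ) * u n) atTop (nhds (2 / σ2)) := by
    have hinv := hinv_lim.inv₀ (by positivity : σ2/2 ≠ 0)
    have heq : ∀ᶠ n : ℕ in atTop, ((u n)⁻¹ / (n:ℝ))⁻¹ = n * u n := by
      filter_upwards [eventually_gt_atTop 0] with n hn
      have hu : (u n) ≠ 0 := (hu_pos n).ne'
      have hnn : (n:ℝ) ≠ 0 := Nat.cast_ne_zero.mpr hn.ne'
      field_simp
    have h2 := hinv.congr' heq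
    have : (σ2/2)⁻¹ = 2/σ2 := by
      rw [inv_div]
    rwa [this] at h2
  -- identify P(Z_n > 0) with u n
  have hPZ : ∀ n, (ℙ {ω | 0 < Z n ω}).toReal = u n := by
    intro n
    have hms : MeasurableSet {ω | Z n ω = 0} := hZmeas n (measurableSet_singleton 0)
    have hzero : (ℙ {ω | Z n ω = 0}).toReal = v n := by
      have hkey0 := hkey n 0 le_rfl zero_le_one
      have hpt : ∀ ω, {ω | Z n ω = 0}.indicator (fun _ => (1:ℝ)) ω = (0:ℝ) ^ Z n ω := by
        intro ω
        by_cases h : Z n ω = 0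
        · simp only [Set.indicator_apply, Set.mem_setOf_eq]
          rw [if_pos h, h, pow_zero]
        · simp only [Set.indicator_apply, Set.mem_setOf_eq]
          rw [if_neg h, zero_pow h]
      calc (ℙ {ω | Z n ω = 0}).toReal
          = ∫ ω, {ω | Z n ω = 0}.indicator (fun _ => (1:ℝ)) ω ∂ℙ :=
            (integral_indicator_one hms).symm
        _ = ∫ ω, (0:ℝ) ^ Z n ω ∂ℙ := integral_congr_ae (Filter.Eventually.of_forall hpt)
        _ = v n := hkey0
    have hcompl : {ω | 0 < Z n ω} = {ω | Z n ω = 0}ᶜ := by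
      ext ω
      simp [Nat.pos_iff_ne_zero]
    rw [hcompl, prob_compl_eq_one_sub hms,
      ENNReal.toReal_sub_of_le prob_le_one ENNReal.one_ne_top]
    simp [hzero, hudef]
  simpa only [hPZ] using hmain
end

section
/- Let $\bar c > 1$, $\Sigma_t > 0$, and set $R_0 = \arctan(1/\sqrt{\bar c - 1})/(\Sigma_t\sqrt{\bar c - 1})$ and $\alpha = \Sigma_t\sqrt{\bar c - 1}$. Then $2\cos(2R_0\alpha) = (\alpha/\Sigma_t - \Sigma_t/\alpha)\sin(2R_0\alpha)$. -/
open Real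

/-- The rod half-length `R₀ = arctan (1 / √(c̄ - 1)) / (St √(c̄ - 1))` satisfies
the dispersion relation `2 cos (2 R₀ α) = (α / St - St / α) sin (2 R₀ α)`
with `α = St √(c̄ - 1)`. -/
theorem rod_dispersion_relation (c St : ℝ) (hc : 1 < c) (hSt : 0 < St)
    (R0 α : ℝ)
    (hR0 : R0 = arctan (1 / Real.sqrt (c - 1)) / (St * Real.sqrt (c - 1)))
    (hα : α = St * Real.sqrt (c - 1)) :
    2 * cos (2 * R0 * α) = (α / St - St / α) * sin (2 * R0 * α) := by
  set s : ℝ := Real.sqrt (c - 1) with hs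
  have hspos : 0 < s := Real.sqrt_pos.2 (by linarith)
  have hSts : St * s ≠ 0 := by positivity
  set θ : ℝ := arctan (1 / s) with hθ
  have hRα : R0 * α = θ := by
    rw [hR0, hα]; field_simp
  have h2 : 2 * R0 * α = 2 * θ := by rw [mul_assoc, hRα]
  rw [h2, Real.sin_two_mul, Real.cos_two_mul', hα]
  have hcos : Real.cos θ ≠ 0 := (Real.cos_arctan _ ▸ (by positivity : (0:ℝ) < 1 / Real.sqrt (1 + (1/s)^2))).ne'
  have htan : Real.sin θ = Real.cos θ / s := by
    have := Real.tan_arctan (1 / s)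
    rw [Real.tan_eq_sin_div_cos] at this
    field_simp at this ⊢
    linarith [this]
  rw [htan]
  field_simp
end

section
/- Let $\alpha, R > 0$ with $\sin(\alpha R)\ne 0$ and $\tan(\alpha R)$ defined and nonzero. With $\varphi_0(x,\Omega) = \frac{\alpha}{4\nu_f\Sigma_f\sin(\alpha R)}(\cos(\alpha x) + \Omega\sin(\alpha x)/\tan(\alpha R))$, $\varphi_0^\dagger(x,\Omega) = \frac{8\sin(\alpha R)}{4R\alpha + 2\sin(2\alpha R)}(\cos(\alpha x) - \Omega\sin(\alpha x)/\tan(\alpha R))$, $\nu_f = 2$, and $\mathcal{V}[g](x,\Omega) = \frac12(g(x,+1)+g(x,-1))^2$, one has $\langle \varphi_0, \mathcal{V}[\varphi_0^\dagger]\rangle = \frac{16(5 + \cos(2\alpha R))\sin^2(\alpha R)}{6\Sigma_f(2\alpha R + \sin(2\alpha R))^2}$, where $\langle f,g\rangle = \sum_{\Omega=\pm1}\int_{-R}^R f\,g\,dx$. -/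
open Real

lemma int_cos3 (α R : ℝ) (hα : α ≠ 0) :
    ∫ x in (-R)..R, cos (α * x) ^ 3
      = 2 / α * (sin (α * R) - sin (α * R) ^ 3 / 3) := by
  have h : ∀ x ∈ Set.uIcc (-R) R,
      HasDerivAt (fun y => (sin (α * y) - sin (α * y) ^ 3 / 3) / α)
        (cos (α * x) ^ 3) x := by
    intro x _
    have hs : HasDerivAt (fun y => sin (α * y)) (cos (α * x) * α) x := by
      simpa [Function.comp_def] using (Real.hasDerivAt_sin (α * x)).comp x
        ((hasDerivAt_id x).const_mul α)
    have := ((hs.sub ((hs.pow 3).div_const 3)).div_const α)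
    refine this.congr_deriv (Eq.symm ?_)
    have h1 : sin (α * x) ^ 2 + cos (α * x) ^ 2 = 1 := sin_sq_add_cos_sq _
    field_simp
    linear_combination (3 * cos (α * x)) * h1
  rw [intervalIntegral.integral_eq_sub_of_hasDerivAt h
    (Continuous.intervalIntegrable (by fun_prop) _ _)]
  simp [mul_neg, mul_comm]
  ring

lemma int_sincos2 (α R : ℝ) (hα : α ≠ 0) :
    ∫ x in (-R)..R, sin (α * x) * cos (α * x) ^ 2 = 0 := by
  have h : ∀ x ∈ Set.uIcc (-R) R,
      HasDerivAt (fun y => -(cos (α * y) ^ 3) / (3 * α))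
        (sin (α * x) * cos (α * x) ^ 2) x := by
    intro x _
    have hc : HasDerivAt (fun y => cos (α * y)) (-sin (α * x) * α) x := by
      simpa [Function.comp_def] using (Real.hasDerivAt_cos (α * x)).comp x
        ((hasDerivAt_id x).const_mul α)
    have := (((hc.pow 3).neg).div_const (3 * α))
    refine this.congr_deriv (Eq.symm ?_)
    field_simp
    ring
  rw [intervalIntegral.integral_eq_sub_of_hasDerivAt h
    (Continuous.intervalIntegrable (by fun_prop) _ _)]
  simp [mul_neg, mul_comm]

/-- Explicit evaluation of the variance inner product
`⟨φ₀, 𝒱[φ₀†]⟩ = 16 (5 + cos (2 α R)) sin² (α R) / (6 Sf (2 α R + sin (2 α R))²)`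
for the critical rod model with `ν_f = 2`. -/
theorem rod_variance_inner_product (α R nf Sf : ℝ)
    (hα : 0 < α) (hR : 0 < R) (hSf : 0 < Sf) (hnf : nf = 2)
    (hsin : sin (α * R) ≠ 0) (hcos : cos (α * R) ≠ 0)
    (htan : tan (α * R) ≠ 0)
    (φ0 φd V : ℝ → ℝ → ℝ)
    (hφ0 : ∀ x Ω, φ0 x Ω = α / (4 * nf * Sf * sin (α * R))
        * (cos (α * x) + Ω * sin (α * x) / tan (α * R)))
    (hφd : ∀ x Ω, φd x Ω = 8 * sin (α * R) / (4 * R * α + 2 * sin (2 * α * R))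
        * (cos (α * x) - Ω * sin (α * x) / tan (α * R)))
    (hV : ∀ x Ω, V x Ω = (1 / 2) * (φd x 1 + φd x (-1)) ^ 2) :
    ∑ Ω ∈ ({-1, 1} : Finset ℝ), ∫ x in (-R)..R, φ0 x Ω * V x Ω
      = 16 * (5 + cos (2 * α * R)) * sin (α * R) ^ 2
          / (6 * Sf * (2 * α * R + sin (2 * α * R)) ^ 2) := by
  have hα' : α ≠ 0 := ne_of_gt hα
  set A : ℝ := α / (4 * nf * Sf * sin (α * R)) with hA
  set C : ℝ := 8 * sin (α * R) / (4 * R * α + 2 * sin (2 * α * R)) with hC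
  set T : ℝ := tan (α * R) with hT
  have hK : ∀ Ω x, φ0 x Ω * V x Ω
      = (2 * A * C ^ 2) * cos (α * x) ^ 3
        + (2 * A * C ^ 2 / T * Ω) * (sin (α * x) * cos (α * x) ^ 2) := by
    intro Ω x
    rw [hV, hφd, hφd, hφ0]
    ring
  have hint : ∀ Ω : ℝ, (∫ x in (-R)..R, φ0 x Ω * V x Ω)
      = (2 * A * C ^ 2) * (2 / α * (sin (α * R) - sin (α * R) ^ 3 / 3)) := by
    intro Ω
    have : (∫ x in (-R)..R, φ0 x Ω * V x Ω)
        = ∫ x in (-R)..R, ((2 * A * C ^ 2) * cos (α * x) ^ 3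
          + (2 * A * C ^ 2 / T * Ω) * (sin (α * x) * cos (α * x) ^ 2)) :=
      intervalIntegral.integral_congr (fun x _ => hK Ω x)
    rw [this, intervalIntegral.integral_add
        ((Continuous.intervalIntegrable (by fun_prop) _ _))
        ((Continuous.intervalIntegrable (by fun_prop) _ _)),
      intervalIntegral.integral_const_mul, intervalIntegral.integral_const_mul,
      int_cos3 α R hα', int_sincos2 α R hα']
    ring
  have h1 : (-1 : ℝ) ∉ ({1} : Finset ℝ) := by norm_num
  rw [Finset.sum_insert h1, Finset.sum_singleton, hint, hint]
  -- now pure algebra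
  have hE : 2 * α * R + sin (2 * α * R) ≠ 0 := by
    have ht : (0:ℝ) < 2 * α * R := by positivity
    rcases le_or_gt Real.pi (2 * α * R) with h | h
    · nlinarith [Real.neg_one_le_sin (2 * α * R), Real.pi_gt_three]
    · have : 0 < sin (2 * α * R) := Real.sin_pos_of_pos_of_lt_pi ht h
      linarith
  have hD : 4 * R * α + 2 * sin (2 * α * R) ≠ 0 := by
    intro h; apply hE; linarith
  have hc2 : cos (2 * α * R) = 1 - 2 * sin (α * R) ^ 2 := by
    rw [show (2 : ℝ) * α * R = 2 * (α * R) by ring, Real.cos_two_mul']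
    linear_combination Real.sin_sq_add_cos_sq (α * R)
  rw [hc2, hA, hC, hnf]
  have hSf' : Sf ≠ 0 := ne_of_gt hSf
  have hD2 : 2 * (α * R) + sin (2 * (α * R)) ≠ 0 := by rw [← mul_assoc]; exact hE
  rw [show (4:ℝ) * R * α + 2 * sin (2 * α * R) = 2 * (2 * (α * R) + sin (2 * (α * R))) by ring_nf]
  rw [show (2:ℝ) * α * R = 2 * (α * R) by ring]
  field_simp
  ring
end
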